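/- Christodoulou's theorem on irreducible mass: let M_irr² = (M² + √(M⁴ - J²))/2 for a Kerr black hole with mass M > 0 and angular momentum |J| ≤ M², with Ω_H = a/(r₊²+a²) where a = J/M and r₊ = M + √(M²-a²). Then the differential of M_irr² along a variation (δM, δJ) satisfies δ(M_irr²) = (∂M_irr²/∂M)δM + (∂M_irr²/∂J)δJ ≥ 0 whenever δM ≥ Ω_H δJ. Equivalently, ∂M_irr²/∂M > 0, and (∂M_irr²/∂M)·Ω_H + ∂M_irr²/∂J = 0 when M⁴ > J². -/

import Mathlib

/-- Christodoulou: δ(M_irr²) ≥ 0 whenever δM ≥ Ω_H δJ; equivalently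
    ∂M_irr²/∂M > 0 and (∂M_irr²/∂M)·Ω_H + ∂M_irr²/∂J = 0. -/
theorem christodoulou_irreducible_mass (M J : ℝ) (hM : 0 < M) (hJ : J^2 < M^4)
    (a rp ΩH fM fJ : ℝ)
    (ha : a = J / M)
    (hrp : rp = M + Real.sqrt (M^2 - a^2))
    (hΩH : ΩH = a / (rp^2 + a^2))
    (hfM : fM = deriv (fun m : ℝ => (m^2 + Real.sqrt (m^4 - J^2)) / 2) M)
    (hfJ : fJ = deriv (fun j : ℝ => (M^2 + Real.sqrt (M^4 - j^2)) / 2) J) :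
    (∀ δM δJ : ℝ, ΩH * δJ ≤ δM → 0 ≤ fM * δM + fJ * δJ) ∧
    0 < fM ∧ fM * ΩH + fJ = 0 := by
  set s := Real.sqrt (M^4 - J^2) with hsdef
  have hpos : (0:ℝ) < M^4 - J^2 := by linarith
  have hs : 0 < s := Real.sqrt_pos.mpr hpos
  have hs2 : s^2 = M^4 - J^2 := Real.sq_sqrt hpos.le
  -- compute fM
  have hdM : HasDerivAt (fun m : ℝ => (m^2 + Real.sqrt (m^4 - J^2)) / 2)
      ((2*M + (1/(2*s)) * (4*M^3)) / 2) M := by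
    have h1 : HasDerivAt (fun m : ℝ => m^4 - J^2) (4*M^3) M := by
      have := (hasDerivAt_pow 4 M).sub_const (J^2)
      simpa using this
    have h2 : HasDerivAt Real.sqrt (1/(2*s)) (M^4 - J^2) :=
      Real.hasDerivAt_sqrt (ne_of_gt hpos)
    have h3 := h2.comp M h1
    have h4 := ((hasDerivAt_pow 2 M).add h3).div_const 2
    simpa using h4
  have hfM' : fM = M + M^3 / s := by
    rw [hfM, hdM.deriv]; field_simp; ring
  -- compute fJ
  have hdJ : HasDerivAt (fun j : ℝ => (M^2 + Real.sqrt (M^4 - j^2)) / 2)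
      ((0 + (1/(2*s)) * (0 - 2*J)) / 2) J := by
    have h1 : HasDerivAt (fun j : ℝ => M^4 - j^2) (0 - 2*J) J := by
      have := (hasDerivAt_const J (M^4)).sub (hasDerivAt_pow 2 J)
      exact this.congr_deriv (by norm_num)
    have h2 : HasDerivAt Real.sqrt (1/(2*s)) (M^4 - J^2) :=
      Real.hasDerivAt_sqrt (ne_of_gt hpos)
    have h3 := h2.comp J h1
    have h4 := ((hasDerivAt_const J (M^2)).add h3).div_const 2
    simpa using h4
  have hfJ' : fJ = -(J / (2*s)) := by
    rw [hfJ, hdJ.deriv]; field_simp; ring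
  -- simplify ΩH
  have hMa : M^2 - a^2 = (M^4 - J^2) / M^2 := by
    rw [ha]; field_simp
  have hsa : Real.sqrt (M^2 - a^2) = s / M := by
    rw [hMa, Real.sqrt_div hpos.le, hsdef]
    congr 1
    rw [Real.sqrt_sq hM.le]
  have hden : rp^2 + a^2 = 2*(M^2+s) := by
    rw [hrp, hsa, ha]
    field_simp
    nlinarith [hs2]
  have hΩH' : ΩH = J / (2*M*(M^2+s)) := by
    rw [hΩH, hden, ha]
    rw [div_div]
    congr 1
    ring
  have hMs : (0:ℝ) < M^2 + s := by positivity
  have hfMpos : 0 < fM := by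
    rw [hfM']; positivity
  have hkey : fM * ΩH + fJ = 0 := by
    rw [hfM', hfJ', hΩH']
    field_simp
    ring
  refine ⟨?_, hfMpos, hkey⟩
  intro δM δJ h
  have : fM * δM + fJ * δJ = fM * (δM - ΩH * δJ) + (fM * ΩH + fJ) * δJ := by ring
  rw [this, hkey]
  have h1 : 0 ≤ δM - ΩH * δJ := by linarith
  nlinarith [mul_nonneg hfMpos.le h1]
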